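/- Let E be a real Hilbert space, f : E → ℝ differentiable with L-Lipschitz gradient (L > 0), and 0 < η ≤ 1/L. Let w^0, …, w^M and g^0, …, g^{M−1} be random vectors in E on a probability space with w^{m+1} = w^m − η·g^m, such that for every m: E⟨∇f(w^m), g^m⟩ = E‖∇f(w^m)‖² and E‖g^m − ∇f(w^m)‖² ≤ σ². Then Σ_{m=0}^{M−1} E‖∇f(w^m)‖² ≤ (2/η)·E[f(w^0) − f(w^M)] + M·η·L·σ². -/

import Mathlib

open MeasureTheory
open scoped RealInnerProductSpace

lemma descent_lemma {E : Type*} [NormedAddCommGroup E] [InnerProductSpace ℝ E] [CompleteSpace E]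
    (f : E → ℝ) (f' : E → E) (L : ℝ) (hL : 0 ≤ L)
    (hgrad : ∀ x, HasGradientAt f (f' x) x)
    (hlip : ∀ x y, ‖f' x - f' y‖ ≤ L * ‖x - y‖) (x y : E) :
    f y ≤ f x + ⟪f' x, y - x⟫ + L / 2 * ‖y - x‖ ^ 2 := by
  set v := y - x with hv
  set φ : ℝ → ℝ := fun t => f (x + t • v) - t * ⟪f' x, v⟫ - L / 2 * t ^ 2 * ‖v‖ ^ 2 with hφ
  have hφ' : ∀ t : ℝ, HasDerivAt φ (⟪f' (x + t • v), v⟫ - ⟪f' x, v⟫ - L * t * ‖v‖ ^ 2) t := by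
    intro t
    have h1 : HasDerivAt (fun t : ℝ => x + t • v) v t := by
      simpa using ((hasDerivAt_id t).smul_const v).const_add x
    have h2 : HasDerivAt (fun t : ℝ => f (x + t • v)) ⟪f' (x + t • v), v⟫ t := by
      have := (hgrad (x + t • v)).hasFDerivAt.comp_hasDerivAt t h1
      simpa [HasGradientAt, real_inner_comm, Function.comp_def] using this
    have h3 : HasDerivAt (fun t : ℝ => t * ⟪f' x, v⟫) ⟪f' x, v⟫ t := by
      simpa using (hasDerivAt_id t).mul_const (⟪f' x, v⟫)
    have h4 : HasDerivAt (fun t : ℝ => L / 2 * t ^ 2 * ‖v‖ ^ 2) (L * t * ‖v‖ ^ 2) t := by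
      have : HasDerivAt (fun t : ℝ => t ^ 2) (2 * t) t := by
        simpa using hasDerivAt_pow 2 t
      have := ((this.const_mul (L / 2)).mul_const (‖v‖ ^ 2))
      rw [show L * t * ‖v‖ ^ 2 = L / 2 * (2 * t) * ‖v‖ ^ 2 by ring]
      exact this
    exact (h2.sub h3).sub h4
  have hanti : AntitoneOn φ (Set.Icc 0 1) := by
    apply antitoneOn_of_deriv_nonpos (convex_Icc 0 1)
    · exact fun t _ => (hφ' t).continuousAt.continuousWithinAt
    · intro t ht
      exact ((hφ' t).differentiableAt).differentiableWithinAt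
    · intro t ht
      rw [interior_Icc] at ht
      rw [(hφ' t).deriv]
      have hineq : ⟪f' (x + t • v) - f' x, v⟫ ≤ L * t * ‖v‖ ^ 2 := by
        calc ⟪f' (x + t • v) - f' x, v⟫ ≤ ‖f' (x + t • v) - f' x‖ * ‖v‖ :=
              real_inner_le_norm _ _
          _ ≤ L * ‖(x + t • v) - x‖ * ‖v‖ := by
              have := hlip (x + t • v) x
              nlinarith [norm_nonneg v]
          _ = L * t * ‖v‖ ^ 2 := by
              rw [add_sub_cancel_left, norm_smul]
              simp [abs_of_pos ht.1]
              ring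
      have : ⟪f' (x + t • v), v⟫ - ⟪f' x, v⟫ = ⟪f' (x + t • v) - f' x, v⟫ := by
        rw [inner_sub_left]
      linarith
  have := hanti (Set.left_mem_Icc.2 zero_le_one) (Set.right_mem_Icc.2 zero_le_one) zero_le_one
  simp only [hφ, zero_smul, add_zero, one_smul, one_pow, one_mul, zero_pow, mul_zero,
    zero_mul, sub_zero] at this
  have hxy : x + v = y := by simp [hv]
  rw [hxy] at this
  linarith

theorem stmt_8 {E : Type*} [NormedAddCommGroup E] [InnerProductSpace ℝ E] [CompleteSpace E]
    {Ω : Type*} [MeasurableSpace Ω] (μ : Measure Ω) [IsProbabilityMeasure μ]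
    (f : E → ℝ) (f' : E → E) (L η σ : ℝ) (hL : 0 < L)
    (hgrad : ∀ x, HasGradientAt f (f' x) x)
    (hlip : ∀ x y, ‖f' x - f' y‖ ≤ L * ‖x - y‖)
    (hη0 : 0 < η) (hη1 : η ≤ 1 / L)
    (M : ℕ) (w : ℕ → Ω → E) (g : ℕ → Ω → E)
    (hstep : ∀ m < M, ∀ ω, w (m + 1) ω = w m ω - η • g m ω)
    (hfI : ∀ m ≤ M, Integrable (fun ω => f (w m ω)) μ)
    (hinnerI : ∀ m < M, Integrable (fun ω => ⟪f' (w m ω), g m ω⟫) μ)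
    (hgradI : ∀ m < M, Integrable (fun ω => ‖f' (w m ω)‖ ^ 2) μ)
    (hvarI : ∀ m < M, Integrable (fun ω => ‖g m ω - f' (w m ω)‖ ^ 2) μ)
    (hunbiased : ∀ m < M,
      ∫ ω, ⟪f' (w m ω), g m ω⟫ ∂μ = ∫ ω, ‖f' (w m ω)‖ ^ 2 ∂μ)
    (hvar : ∀ m < M, ∫ ω, ‖g m ω - f' (w m ω)‖ ^ 2 ∂μ ≤ σ ^ 2) :
    ∑ m ∈ Finset.range M, ∫ ω, ‖f' (w m ω)‖ ^ 2 ∂μ ≤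
      (2 / η) * ∫ ω, (f (w 0 ω) - f (w M ω)) ∂μ + (M : ℝ) * η * L * σ ^ 2 := by
  have hLη : L * η ≤ 1 := by
    rw [div_eq_mul_inv, one_mul] at hη1
    calc L * η ≤ L * L⁻¹ := by gcongr
      _ = 1 := mul_inv_cancel₀ hL.ne'
  -- key per-step integrated inequality
  have key : ∀ m < M, (η / 2) * ∫ ω, ‖f' (w m ω)‖ ^ 2 ∂μ ≤
      (∫ ω, f (w m ω) ∂μ) - (∫ ω, f (w (m+1) ω) ∂μ) + L * η ^ 2 / 2 * σ ^ 2 := by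
    intro m hm
    -- pointwise: ‖g‖² = ‖g-∇f‖² + 2⟪∇f,g⟫ - ‖∇f‖²
    have hgsq : ∀ ω, ‖g m ω‖ ^ 2 =
        ‖g m ω - f' (w m ω)‖ ^ 2 + 2 * ⟪f' (w m ω), g m ω⟫ - ‖f' (w m ω)‖ ^ 2 := by
      intro ω
      have := @norm_sub_sq_real E _ _ (g m ω) (f' (w m ω))
      rw [real_inner_comm] at this
      linarith
    have hgI : Integrable (fun ω => ‖g m ω‖ ^ 2) μ := by
      have : Integrable (fun ω => ‖g m ω - f' (w m ω)‖ ^ 2 + 2 * ⟪f' (w m ω), g m ω⟫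
          - ‖f' (w m ω)‖ ^ 2) μ :=
        ((hvarI m hm).add ((hinnerI m hm).const_mul 2)).sub (hgradI m hm)
      exact this.congr (Filter.Eventually.of_forall fun ω => (hgsq ω).symm)
    have hgint : ∫ ω, ‖g m ω‖ ^ 2 ∂μ ≤ σ ^ 2 + ∫ ω, ‖f' (w m ω)‖ ^ 2 ∂μ := by
      have : ∫ ω, ‖g m ω‖ ^ 2 ∂μ = (∫ ω, ‖g m ω - f' (w m ω)‖ ^ 2 ∂μ)
          + 2 * (∫ ω, ⟪f' (w m ω), g m ω⟫ ∂μ) - ∫ ω, ‖f' (w m ω)‖ ^ 2 ∂μ := by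
        have e : ∫ ω, (‖g m ω - f' (w m ω)‖ ^ 2 + 2 * ⟪f' (w m ω), g m ω⟫
            - ‖f' (w m ω)‖ ^ 2) ∂μ = (∫ ω, ‖g m ω - f' (w m ω)‖ ^ 2 ∂μ)
            + 2 * (∫ ω, ⟪f' (w m ω), g m ω⟫ ∂μ) - ∫ ω, ‖f' (w m ω)‖ ^ 2 ∂μ := by
          have I1 : Integrable (fun ω => ‖g m ω - f' (w m ω)‖ ^ 2
              + 2 * ⟪f' (w m ω), g m ω⟫) μ := (hvarI m hm).add ((hinnerI m hm).const_mul 2)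
          rw [integral_sub I1 (hgradI m hm),
            integral_add (hvarI m hm) ((hinnerI m hm).const_mul 2), integral_const_mul]
        rw [← e]
        exact integral_congr_ae (Filter.Eventually.of_forall hgsq)
      rw [this, hunbiased m hm]
      linarith [hvar m hm]
    -- pointwise descent
    have hpt : ∀ ω, f (w (m+1) ω) ≤ f (w m ω) - η * ⟪f' (w m ω), g m ω⟫
        + L / 2 * η ^ 2 * ‖g m ω‖ ^ 2 := by
      intro ω
      have := descent_lemma f f' L hL.le hgrad hlip (w m ω) (w (m+1) ω)
      rw [hstep m hm ω] at this ⊢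
      have hd : w m ω - η • g m ω - w m ω = -(η • g m ω) := by abel
      rw [hd] at this
      rw [inner_neg_right, inner_smul_right, norm_neg, norm_smul] at this
      simp only [Real.norm_eq_abs, abs_of_pos hη0] at this
      nlinarith [this]
    -- integrate
    have hint : ∫ ω, f (w (m+1) ω) ∂μ ≤ (∫ ω, f (w m ω) ∂μ)
        - η * (∫ ω, ⟪f' (w m ω), g m ω⟫ ∂μ) + L / 2 * η ^ 2 * ∫ ω, ‖g m ω‖ ^ 2 ∂μ := by
      have hRI : Integrable (fun ω => f (w m ω) - η * ⟪f' (w m ω), g m ω⟫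
          + L / 2 * η ^ 2 * ‖g m ω‖ ^ 2) μ :=
        ((hfI m hm.le).sub ((hinnerI m hm).const_mul η)).add (hgI.const_mul _)
      calc ∫ ω, f (w (m+1) ω) ∂μ ≤ ∫ ω, (f (w m ω) - η * ⟪f' (w m ω), g m ω⟫
            + L / 2 * η ^ 2 * ‖g m ω‖ ^ 2) ∂μ :=
          integral_mono (hfI (m+1) hm) hRI hpt
        _ = _ := by
          have I2 : Integrable (fun ω => f (w m ω) - η * ⟪f' (w m ω), g m ω⟫) μ :=
            (hfI m hm.le).sub ((hinnerI m hm).const_mul η)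
          have I3 : Integrable (fun ω => L / 2 * η ^ 2 * ‖g m ω‖ ^ 2) μ :=
            hgI.const_mul _
          rw [integral_add I2 I3,
            integral_sub (hfI m hm.le) ((hinnerI m hm).const_mul η),
            integral_const_mul, integral_const_mul]
    rw [hunbiased m hm] at hint
    have hG : 0 ≤ ∫ ω, ‖f' (w m ω)‖ ^ 2 ∂μ :=
      integral_nonneg fun ω => sq_nonneg _
    nlinarith [hgint, mul_le_mul_of_nonneg_right hLη (mul_nonneg hη0.le hG),
      mul_le_mul_of_nonneg_left hgint (by positivity : (0:ℝ) ≤ L / 2 * η ^ 2)]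
  -- sum up
  have hsum : (η / 2) * ∑ m ∈ Finset.range M, ∫ ω, ‖f' (w m ω)‖ ^ 2 ∂μ ≤
      (∫ ω, f (w 0 ω) ∂μ) - (∫ ω, f (w M ω) ∂μ) + M * (L * η ^ 2 / 2 * σ ^ 2) := by
    rw [Finset.mul_sum]
    have htel : ∑ m ∈ Finset.range M,
        ((∫ ω, f (w m ω) ∂μ) - (∫ ω, f (w (m+1) ω) ∂μ)) =
        (∫ ω, f (w 0 ω) ∂μ) - (∫ ω, f (w M ω) ∂μ) := by
      exact Finset.sum_range_sub' (fun m => ∫ ω, f (w m ω) ∂μ) M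
    calc ∑ m ∈ Finset.range M, (η / 2) * ∫ ω, ‖f' (w m ω)‖ ^ 2 ∂μ
        ≤ ∑ m ∈ Finset.range M, ((∫ ω, f (w m ω) ∂μ) - (∫ ω, f (w (m+1) ω) ∂μ)
            + L * η ^ 2 / 2 * σ ^ 2) :=
          Finset.sum_le_sum fun m hm => key m (Finset.mem_range.1 hm)
      _ = (∫ ω, f (w 0 ω) ∂μ) - (∫ ω, f (w M ω) ∂μ) + M * (L * η ^ 2 / 2 * σ ^ 2) := by
          rw [Finset.sum_add_distrib, htel, Finset.sum_const, Finset.card_range,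
            nsmul_eq_mul]
  rw [integral_sub (hfI 0 (Nat.zero_le M)) (hfI M le_rfl)]
  have hηne : η ≠ 0 := hη0.ne'
  have h2η : (0:ℝ) ≤ 2 / η := by positivity
  calc ∑ m ∈ Finset.range M, ∫ ω, ‖f' (w m ω)‖ ^ 2 ∂μ
      = 2 / η * (η / 2 * ∑ m ∈ Finset.range M, ∫ ω, ‖f' (w m ω)‖ ^ 2 ∂μ) := by
        field_simp
    _ ≤ 2 / η * ((∫ ω, f (w 0 ω) ∂μ) - (∫ ω, f (w M ω) ∂μ)
          + M * (L * η ^ 2 / 2 * σ ^ 2)) := mul_le_mul_of_nonneg_left hsum h2η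
    _ = 2 / η * ((∫ ω, f (w 0 ω) ∂μ) - ∫ ω, f (w M ω) ∂μ) + M * η * L * σ ^ 2 := by
        field_simp
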